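/- Let a, b, c be real numbers and r > 0. Define f₀ = r³ + ar² + br + c, f₁ = 3r³ + ar² − br − 3c, f₂ = 3r³ − ar² − br + 3c, f₃ = r³ − ar² + br − c. Then every complex root of z³ + az² + bz + c has modulus strictly less than r if and only if f₀ > 0, f₁ > 0, f₂ > 0, f₃ > 0, and f₁f₂ − f₀f₃ > 0. -/

import Mathlib

lemma cubic_root (a b c : ℝ) : ∃ x : ℝ, x ^ 3 + a * x ^ 2 + b * x + c = 0 := by
  set M : ℝ := 1 + |a| + |b| + |c| with hM
  have hM1 : 1 ≤ M := by
    have := abs_nonneg a; have := abs_nonneg b; have := abs_nonneg c; simp [hM]; linarith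
  have hcont : ContinuousOn (fun t : ℝ => t ^ 3 + a * t ^ 2 + b * t + c) (Set.Icc (-M) M) := by
    fun_prop
  have hle : (-M : ℝ) ≤ M := by linarith
  have hmem : (0 : ℝ) ∈ Set.Icc ((-M) ^ 3 + a * (-M) ^ 2 + b * (-M) + c)
      (M ^ 3 + a * M ^ 2 + b * M + c) := by
    constructor
    · have h1 : -|a| ≤ a := neg_abs_le a
      have h2 : -|b| ≤ b := neg_abs_le b
      have h3 : -|c| ≤ c := neg_abs_le c
      have h1' : a ≤ |a| := le_abs_self a
      have h2' : b ≤ |b| := le_abs_self b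
      have h3' : c ≤ |c| := le_abs_self c
      have ha := abs_nonneg a; have hb := abs_nonneg b; have hc := abs_nonneg c
      nlinarith [sq_nonneg M, mul_le_mul_of_nonneg_left h1' (sq_nonneg M),
        mul_le_mul_of_nonneg_right h2' (by nlinarith : (0:ℝ) ≤ M),
        sq_nonneg (M - 1), mul_nonneg (mul_nonneg ha hb) hc]
    · have h1 : -|a| ≤ a := neg_abs_le a
      have h2 : -|b| ≤ b := neg_abs_le b
      have h3 : -|c| ≤ c := neg_abs_le c
      have ha := abs_nonneg a; have hb := abs_nonneg b; have hc := abs_nonneg c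
      nlinarith [sq_nonneg M, mul_le_mul_of_nonneg_left h1 (sq_nonneg M),
        mul_le_mul_of_nonneg_right h2 (by nlinarith : (0:ℝ) ≤ M),
        sq_nonneg (M - 1), mul_nonneg (mul_nonneg ha hb) hc]
  have := intermediate_value_Icc hle hcont hmem
  obtain ⟨x, -, hx⟩ := this
  exact ⟨x, hx⟩


lemma real_pair (r s w : ℝ) (hr : 0 < r) (e1 : (r - s) * (r - w) > 0)
    (e2 : (r + s) * (r + w) > 0) (e3 : s * w < r ^ 2) : s ^ 2 < r ^ 2 := by
  have h1 : s < r := by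
    by_contra h; push_neg at h
    have hw : r * (2 * r - s - w) > 0 := by nlinarith
    have hw2 : 0 < r - w := by nlinarith
    nlinarith
  have h2 : -r < s := by
    by_contra h; push_neg at h
    have hw : r * (2 * r + s + w) > 0 := by nlinarith
    have hw2 : 0 < r + w := by nlinarith
    nlinarith
  nlinarith

lemma quad_disk (p q r : ℝ) (hr : 0 < r) :
    (∀ z : ℂ, z ^ 2 + (p : ℂ) * z + (q : ℂ) = 0 → ‖z‖ < r) ↔
      (r ^ 2 + p * r + q > 0 ∧ r ^ 2 - p * r + q > 0 ∧ q < r ^ 2) := by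
  constructor
  · intro h
    by_cases hd : 0 ≤ p ^ 2 - 4 * q
    · -- real roots
      set d := Real.sqrt (p ^ 2 - 4 * q) with hdd
      have hd2 : d ^ 2 = p ^ 2 - 4 * q := Real.sq_sqrt hd
      set s1 := (-p + d) / 2 with hs1
      set s2 := (-p - d) / 2 with hs2
      have r1 : s1 ^ 2 + p * s1 + q = 0 := by rw [hs1]; linear_combination hd2 / 4
      have r2 : s2 ^ 2 + p * s2 + q = 0 := by rw [hs2]; linear_combination hd2 / 4
      have c1 : ((s1 : ℂ)) ^ 2 + (p : ℂ) * s1 + q = 0 := by exact_mod_cast congrArg (Complex.ofReal) r1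
      have c2 : ((s2 : ℂ)) ^ 2 + (p : ℂ) * s2 + q = 0 := by exact_mod_cast congrArg (Complex.ofReal) r2
      have a1 : |s1| < r := by have := h s1 c1; rwa [Complex.norm_real, Real.norm_eq_abs] at this
      have a2 : |s2| < r := by have := h s2 c2; rwa [Complex.norm_real, Real.norm_eq_abs] at this
      rw [abs_lt] at a1 a2
      have hsum : s1 + s2 = -p := by rw [hs1, hs2]; ring
      have hprod : s1 * s2 = q := by rw [hs1, hs2]; linear_combination -hd2 / 4
      refine ⟨by nlinarith [mul_pos (by linarith : 0 < r - s1) (by linarith : 0 < r - s2)],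
        by nlinarith [mul_pos (by linarith : 0 < r + s1) (by linarith : 0 < r + s2)],
        by nlinarith [mul_pos (by linarith : 0 < r - s1) (by linarith : 0 < r + s2),
          mul_pos (by linarith : 0 < r + s1) (by linarith : 0 < r - s2)]⟩
    · push_neg at hd
      set t := Real.sqrt (4 * q - p ^ 2) with htt
      have ht2 : t ^ 2 = 4 * q - p ^ 2 := Real.sq_sqrt (by linarith)
      have ht2c : (t : ℂ) ^ 2 = 4 * (q : ℂ) - (p : ℂ) ^ 2 := by exact_mod_cast congrArg (Complex.ofReal) ht2
      set z : ℂ := -(p : ℂ) / 2 + (t : ℂ) / 2 * Complex.I with hz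
      have hroot : z ^ 2 + (p : ℂ) * z + q = 0 := by
        rw [hz]
        linear_combination ((t : ℂ) ^ 2 / 4) * Complex.I_sq - (1 / 4 : ℂ) * ht2c
      have habs : ‖z‖ ^ 2 = q := by
        rw [Complex.sq_norm, hz, Complex.normSq_apply]
        simp
        nlinarith [ht2]
      have := h z hroot
      have hq : q < r ^ 2 := by
        rw [← habs]
        exact pow_lt_pow_left₀ this (norm_nonneg z) (by norm_num) |>.trans_le (le_refl _)
      refine ⟨by nlinarith [sq_nonneg (r + p / 2)], by nlinarith [sq_nonneg (r - p / 2)], hq⟩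
  · rintro ⟨hA, hB, hq⟩ z hz
    have hre : z.re ^ 2 - z.im ^ 2 + p * z.re + q = 0 := by
      have := congrArg Complex.re hz
      simpa [pow_two, Complex.add_re, Complex.mul_re, Complex.mul_im] using this
    have him : z.im * (2 * z.re + p) = 0 := by
      have := congrArg Complex.im hz
      simp [pow_two, Complex.add_im, Complex.mul_re, Complex.mul_im] at this
      linarith
    set s := z.re; set t := z.im
    have key : s ^ 2 + t ^ 2 < r ^ 2 := by
      rcases mul_eq_zero.mp him with h0 | h0
      · -- real root
        have hs : s ^ 2 + p * s + q = 0 := by rw [← hre, h0]; ring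
        have e1 : (r - s) * (r - (-p - s)) > 0 := by nlinarith [hA, hs]
        have e2 : (r + s) * (r + (-p - s)) > 0 := by nlinarith [hB, hs]
        have e3 : s * (-p - s) < r ^ 2 := by nlinarith [hq, hs]
        have h0' : t = 0 := h0
        rw [h0']
        have := real_pair r s (-p - s) hr e1 e2 e3
        nlinarith [this]
      · have hs : s = -p / 2 := by linarith
        have : t ^ 2 = s ^ 2 + p * s + q := by linarith
        rw [this, hs]; nlinarith
    have : ‖z‖ ^ 2 < r ^ 2 := by
      rw [Complex.sq_norm, Complex.normSq_apply]; nlinarith [key]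
    exact lt_of_pow_lt_pow_left₀ 2 hr.le this

lemma rh_core (u v A B D : ℝ) (huv : 0 < u + v) :
    (0 < u ∧ 0 < v ∧ 0 < A ∧ 0 < B ∧ 0 < D) ↔
      (0 < u * A ∧ 0 < u * D + v * A ∧ 0 < u * B + v * D ∧ 0 < v * B ∧
        0 < (u * D + v * A) * (u * B + v * D) - (u * A) * (v * B)) := by
  constructor
  · rintro ⟨hu, hv, hA, hB, hD⟩
    refine ⟨mul_pos hu hA, by positivity, by positivity, mul_pos hv hB, ?_⟩
    nlinarith [mul_pos (mul_pos hu hu) (mul_pos hB hD), mul_pos (mul_pos hu hv) (mul_pos hD hD),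
      mul_pos (mul_pos hv hv) (mul_pos hA hD)]
  · rintro ⟨h0, h1, h2, h3, h5⟩
    have hu : 0 < u := by
      by_contra h; push_neg at h
      have hune : u ≠ 0 := by rintro rfl; simp at h0
      have hu' : u < 0 := lt_of_le_of_ne h hune
      have hA' : A < 0 := by nlinarith
      rcases lt_trichotomy v 0 with hv' | hv' | hv'
      · linarith
      · rw [hv'] at h3; simp at h3
      · have hB' : 0 < B := by nlinarith
        -- f2 = uB + vD > 0 with uB<0 gives vD>0 so D>0; f1 = uD+vA>0 with vA<0 gives uD>0 so D<0
        have hD1 : 0 < D := by nlinarith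
        have hD2 : D < 0 := by nlinarith
        linarith
    have hA : 0 < A := by nlinarith
    have hv : 0 < v := by
      by_contra h; push_neg at h
      have hvne : v ≠ 0 := by rintro rfl; simp at h3
      have hv' : v < 0 := lt_of_le_of_ne h hvne
      have hB' : B < 0 := by nlinarith
      -- f1 = uD + vA > 0, vA<0 ⇒ uD>0 ⇒ D>0; then f2 = uB+vD<0 contra
      have hD1 : 0 < D := by nlinarith
      nlinarith
    have hB : 0 < B := by nlinarith
    have hS : 0 < u * (u * B + v * D) + v ^ 2 * A := by positivity
    have hD : 0 < D := by
      by_contra h; push_neg at h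
      nlinarith
    exact ⟨hu, hv, hA, hB, hD⟩

/-- radius-r Routh–Hurwitz criterion for a real monic cubic:
all complex roots of z³ + az² + bz + c lie in the open disk of radius r iff
f₀ > 0, f₁ > 0, f₂ > 0, f₃ > 0 and f₁f₂ − f₀f₃ > 0, where the fᵢ come from the
bilinear substitution z = r(s+1)/(s−1). -/
theorem stmt_18 (a b c r : ℝ) (hr : 0 < r) :
    (∀ z : ℂ, z ^ 3 + (a : ℂ) * z ^ 2 + (b : ℂ) * z + (c : ℂ) = 0 →
        ‖z‖ < r) ↔
      (r ^ 3 + a * r ^ 2 + b * r + c > 0 ∧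
       3 * r ^ 3 + a * r ^ 2 - b * r - 3 * c > 0 ∧
       3 * r ^ 3 - a * r ^ 2 - b * r + 3 * c > 0 ∧
       r ^ 3 - a * r ^ 2 + b * r - c > 0 ∧
       (3 * r ^ 3 + a * r ^ 2 - b * r - 3 * c) * (3 * r ^ 3 - a * r ^ 2 - b * r + 3 * c)
         - (r ^ 3 + a * r ^ 2 + b * r + c) * (r ^ 3 - a * r ^ 2 + b * r - c) > 0) := by
  obtain ⟨x, hx⟩ := cubic_root a b c
  set p : ℝ := a + x with hp
  set q : ℝ := b + x * (a + x) with hq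
  have hxc : (x : ℂ) ^ 3 + (a : ℂ) * (x : ℂ) ^ 2 + (b : ℂ) * (x : ℂ) + (c : ℂ) = 0 := by
    exact_mod_cast congrArg (Complex.ofReal) hx
  have hfac : ∀ z : ℂ, z ^ 3 + (a : ℂ) * z ^ 2 + (b : ℂ) * z + (c : ℂ)
      = (z - (x : ℂ)) * (z ^ 2 + (p : ℂ) * z + (q : ℂ)) := by
    intro z
    rw [hp, hq]
    push_cast
    linear_combination hxc
  have step1 : (∀ z : ℂ, z ^ 3 + (a : ℂ) * z ^ 2 + (b : ℂ) * z + (c : ℂ) = 0 →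
        ‖z‖ < r) ↔
      (|x| < r ∧ (r ^ 2 + p * r + q > 0 ∧ r ^ 2 - p * r + q > 0 ∧ q < r ^ 2)) := by
    rw [← quad_disk p q r hr]
    constructor
    · intro h
      refine ⟨?_, fun z hz => h z ?_⟩
      · have := h (x : ℂ) (by rw [hfac]; simp)
        rwa [Complex.norm_real, Real.norm_eq_abs] at this
      · rw [hfac z, hz, mul_zero]
    · rintro ⟨hxr, hquad⟩ z hz
      rw [hfac z] at hz
      rcases mul_eq_zero.mp hz with h | h
      · rw [sub_eq_zero.mp h, Complex.norm_real, Real.norm_eq_abs]; exact hxr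
      · exact hquad z h
  rw [step1, abs_lt]
  have h0 : r ^ 3 + a * r ^ 2 + b * r + c = (r - x) * (r ^ 2 + p * r + q) := by
    rw [hp, hq]; linear_combination hx
  have h1 : 3 * r ^ 3 + a * r ^ 2 - b * r - 3 * c
      = (r - x) * (2 * (r ^ 2 - q)) + (r + x) * (r ^ 2 + p * r + q) := by
    rw [hp, hq]; linear_combination (-3 : ℝ) * hx
  have h2 : 3 * r ^ 3 - a * r ^ 2 - b * r + 3 * c
      = (r - x) * (r ^ 2 - p * r + q) + (r + x) * (2 * (r ^ 2 - q)) := by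
    rw [hp, hq]; linear_combination (3 : ℝ) * hx
  have h3 : r ^ 3 - a * r ^ 2 + b * r - c = (r + x) * (r ^ 2 - p * r + q) := by
    rw [hp, hq]; linear_combination (-1 : ℝ) * hx
  rw [h0, h1, h2, h3]
  have hcore := rh_core (r - x) (r + x) (r ^ 2 + p * r + q) (r ^ 2 - p * r + q)
    (2 * (r ^ 2 - q)) (by linarith)
  constructor
  · rintro ⟨⟨hx1, hx2⟩, hA, hB, hq'⟩
    have := hcore.mp ⟨by linarith, by linarith, hA, hB, by linarith⟩
    exact ⟨this.1, this.2.1, this.2.2.1, this.2.2.2.1, this.2.2.2.2⟩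
  · rintro ⟨g0, g1, g2, g3, g5⟩
    have := hcore.mpr ⟨g0, g1, g2, g3, g5⟩
    exact ⟨⟨by linarith [this.1, this.2.1], by linarith [this.1]⟩,
      this.2.2.1, this.2.2.2.1, by linarith [this.2.2.2.2]⟩
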